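/- Let a ∈ (0,1/2), let s = √2·(a − 1/2), and let Φ : ℝ → ℝ be twice continuously differentiable with 0 ≤ Φ(η) ≤ 1 for all η, Φ''(η) + s·Φ'(η) + Φ(η)(1 − Φ(η))(Φ(η) − a) = 0 for all η ∈ ℝ, Φ(η) → 0 as η → −∞ and Φ(η) → 1 as η → +∞. Then there exists η₀ ∈ ℝ such that Φ(η) = (1/2)(1 + tanh(√2·(η + η₀)/4)) for all η ∈ ℝ; i.e., the bistable front profile is unique up to translation and coincides with the explicit tanh profile. -/

import Mathlib

open Filter Topology

/-- lower bound from derivative lower bound on a right half-line -/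
lemma front_mono_helper {f : ℝ → ℝ} (hf : Differentiable ℝ f) {M c : ℝ}
    (h : ∀ x, M ≤ x → c ≤ deriv f x) :
    ∀ x, M ≤ x → f M + c * (x - M) ≤ f x := by
  intro x hx
  have hd : ∀ y, deriv (fun y => f y - c * y) y = deriv f y - c := by
    intro y
    have h1 : HasDerivAt (fun y => f y - c * y) (deriv f y - c) y := by
      have := (hf y).hasDerivAt.sub (((hasDerivAt_id y).const_mul c))
      exact this.congr_deriv (by simp)
    exact h1.deriv
  have hdiff : Differentiable ℝ (fun y => f y - c * y) :=
    hf.sub ((differentiable_id.const_mul c))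
  have H : MonotoneOn (fun y => f y - c * y) (Set.Ici M) := by
    refine monotoneOn_of_deriv_nonneg (convex_Ici M) hdiff.continuous.continuousOn
      (hdiff.differentiableOn) ?_
    intro y hy
    rw [interior_Ici] at hy
    rw [hd y]
    have := h y (le_of_lt hy)
    linarith
  have := H (Set.self_mem_Ici) (Set.mem_Ici.mpr hx) hx
  simp only at this
  linarith

lemma front_anti_helper {f : ℝ → ℝ} (hf : Differentiable ℝ f) {M c : ℝ}
    (h : ∀ x, M ≤ x → deriv f x ≤ c) :
    ∀ x, M ≤ x → f x ≤ f M + c * (x - M) := by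
  intro x hx
  have hd : ∀ y, deriv (fun y => -f y) y = -deriv f y := by
    intro y; exact ((hf y).hasDerivAt.neg).deriv
  have := front_mono_helper (f := fun y => -f y) hf.neg (M := M) (c := -c)
    (fun y hy => by rw [hd y]; have := h y hy; linarith) x hx
  linarith

lemma half_one_add_tanh_logit {p : ℝ} (h0 : 0 < p) (h1 : p < 1) :
    (1/2 : ℝ) * (1 + Real.tanh ((Real.log p - Real.log (1 - p)) / 2)) = p := by
  set t := (Real.log p - Real.log (1 - p)) / 2 with ht
  have h1p : 0 < 1 - p := by linarith
  have hexp : Real.exp t * Real.exp t = p / (1 - p) := by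
    rw [← Real.exp_add]
    have h2 : t + t = Real.log p - Real.log (1 - p) := by rw [ht]; ring
    rw [h2, Real.exp_sub, Real.exp_log h0, Real.exp_log h1p]
  have hepos := Real.exp_pos t
  rw [Real.tanh_eq_sinh_div_cosh, Real.sinh_eq, Real.cosh_eq, Real.exp_neg]
  have hE : Real.exp t ≠ 0 := ne_of_gt hepos
  have hden : Real.exp t + (Real.exp t)⁻¹ > 0 := by positivity
  have h3 : Real.exp t * Real.exp t * (1 - p) = p := by
    rw [hexp]; field_simp
  field_simp
  linear_combination 2 * h3




set_option maxHeartbeats 1000000 in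
/-- Uniqueness up to translation of the bistable front profile: if for
`a ∈ (0,1/2)` and speed `s = √2(a − 1/2)` a `C²` profile `Φ` with values in
`[0,1]` solves `Φ'' + sΦ' + Φ(1−Φ)(Φ−a) = 0` with `Φ(−∞) = 0` and
`Φ(+∞) = 1`, then `Φ` is a translate of the explicit tanh profile:
`Φ(η) = (1/2)(1 + tanh(√2(η + η₀)/4))` for some `η₀ ∈ ℝ`. -/
theorem bistable_front_profile_unique_up_to_translation
    (a : ℝ) (ha : a ∈ Set.Ioo (0 : ℝ) (1/2))
    (s : ℝ) (hs : s = Real.sqrt 2 * (a - 1/2))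
    (Φ : ℝ → ℝ) (hΦ : ContDiff ℝ 2 Φ)
    (hrange : ∀ η : ℝ, 0 ≤ Φ η ∧ Φ η ≤ 1)
    (hODE : ∀ η : ℝ,
      deriv (deriv Φ) η + s * deriv Φ η + Φ η * (1 - Φ η) * (Φ η - a) = 0)
    (hlim0 : Tendsto Φ atBot (𝓝 0)) (hlim1 : Tendsto Φ atTop (𝓝 1)) :
    ∃ η₀ : ℝ, ∀ η : ℝ,
      Φ η = (1/2) * (1 + Real.tanh (Real.sqrt 2 * (η + η₀) / 4)) := by
  subst hs
  obtain ⟨ha0, ha2⟩ := ha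
  set r : ℝ := Real.sqrt 2 with hr
  have hrpos : 0 < r := Real.sqrt_pos.mpr (by norm_num)
  have hrr : r * r = 2 := Real.mul_self_sqrt (by norm_num)
  have hrle : r ≤ 2 := by nlinarith
  -- differentiability facts
  have h21 : ContDiff ℝ ((1 : ℕ) + 1) Φ := by exact_mod_cast hΦ
  have hstep := contDiff_succ_iff_deriv.mp h21
  have hΦd : Differentiable ℝ Φ := hstep.1
  have hΦ'c1 : ContDiff ℝ 1 (deriv Φ) := hstep.2.2
  have hΦ'd : Differentiable ℝ (deriv Φ) := hΦ'c1.differentiable one_ne_zero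
  set k : ℝ := r / 2 with hk
  have hkpos : 0 < k := by positivity
  set w : ℝ → ℝ := fun η => deriv Φ η - k * (Φ η * (1 - Φ η)) with hwdef
  have hwHas : ∀ η, HasDerivAt w
      (deriv (deriv Φ) η
        - k * (deriv Φ η * (1 - Φ η) + Φ η * (0 - deriv Φ η))) η := by
    intro η
    exact (hΦ'd η).hasDerivAt.sub
      (((hΦd η).hasDerivAt.mul ((hasDerivAt_const η (1:ℝ)).sub (hΦd η).hasDerivAt)).const_mul k)
  have hwd : Differentiable ℝ w := fun η => (hwHas η).differentiableAt
  set g : ℝ → ℝ := fun η => r * (Φ η - a) with hgdef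
  have hw' : ∀ η, deriv w η = g η * w η := by
    intro η
    rw [(hwHas η).deriv]
    simp only [hgdef, hwdef, hk]
    linear_combination (hODE η) + (Φ η * (1 - Φ η) * (Φ η - a) / 2) * hrr
  have hgle : ∀ η, g η ≤ r := by
    intro η
    have := (hrange η).2
    simp only [hgdef]
    nlinarith
  have hgge : ∀ η, -r ≤ g η := by
    intro η
    have := (hrange η).1
    simp only [hgdef]
    nlinarith
  have hgcont : Continuous g := by
    have := hΦd.continuous
    fun_prop
  -- Step 1 : w vanishes identically
  have hw0 : ∀ η, w η = 0 := by
    by_contra hcon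
    push_neg at hcon
    obtain ⟨η₁, hη₁⟩ := hcon
    -- no zero anywhere
    have hnz : ∀ η, w η ≠ 0 := by
      intro η₂ hz
      apply hη₁
      -- Gronwall both directions from η₂
      rcases le_or_gt η₂ η₁ with hle | hlt
      · -- forward: use u = w^2 * exp(-2r η)
        have hu : ∀ x, HasDerivAt (fun y => w y ^ 2 * Real.exp (-(2*r) * y))
            (2 * w x ^ 2 * (g x - r) * Real.exp (-(2*r) * x)) x := by
          intro x
          have h1 : HasDerivAt (fun y => w y ^ 2) (2 * w x ^ 1 * deriv w x) x := by
            have := ((hwd x).hasDerivAt).pow 2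
            exact this.congr_deriv (by simp)
          have h2 : HasDerivAt (fun y => Real.exp (-(2*r) * y))
              (Real.exp (-(2*r) * x) * (-(2*r))) x := by
            have h3 : HasDerivAt (fun y => -(2*r) * y) (-(2*r)) x := by
              simpa using (hasDerivAt_id x).const_mul (-(2*r))
            exact h3.exp
          have := h1.mul h2
          refine this.congr_deriv ?_
          rw [hw' x]; ring
        have hanti : Antitone (fun y => w y ^ 2 * Real.exp (-(2*r) * y)) := by
          refine antitone_of_deriv_nonpos (fun x => (hu x).differentiableAt) ?_
          intro x
          rw [(hu x).deriv]
          have h4 := hgle x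
          have h5 : 2 * w x ^ 2 * (g x - r) ≤ 0 := by nlinarith [sq_nonneg (w x)]
          exact mul_nonpos_iff.mpr (Or.inr ⟨h5, (Real.exp_pos _).le⟩)
        have h5 := hanti hle
        simp only [hz] at h5
        have h6 : w η₁ ^ 2 * Real.exp (-(2*r) * η₁) ≤ 0 := by simpa using h5
        have h7 := Real.exp_pos (-(2*r) * η₁)
        have h8 : w η₁ ^ 2 = 0 := le_antisymm (by nlinarith [sq_nonneg (w η₁)]) (sq_nonneg _)
        exact pow_eq_zero_iff (by norm_num) |>.mp h8
      · -- backward: use u = w^2 * exp(2r η), monotone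
        have hu : ∀ x, HasDerivAt (fun y => w y ^ 2 * Real.exp ((2*r) * y))
            (2 * w x ^ 2 * (g x + r) * Real.exp ((2*r) * x)) x := by
          intro x
          have h1 : HasDerivAt (fun y => w y ^ 2) (2 * w x ^ 1 * deriv w x) x := by
            have := ((hwd x).hasDerivAt).pow 2
            exact this.congr_deriv (by simp)
          have h2 : HasDerivAt (fun y => Real.exp ((2*r) * y))
              (Real.exp ((2*r) * x) * (2*r)) x := by
            have h3 : HasDerivAt (fun y => (2*r) * y) (2*r) x := by
              simpa using (hasDerivAt_id x).const_mul (2*r)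
            exact h3.exp
          have := h1.mul h2
          refine this.congr_deriv ?_
          rw [hw' x]; ring
        have hmono : Monotone (fun y => w y ^ 2 * Real.exp ((2*r) * y)) := by
          refine monotone_of_deriv_nonneg (fun x => (hu x).differentiableAt) ?_
          intro x
          rw [(hu x).deriv]
          have h4 := hgge x
          have h5 : 0 ≤ 2 * w x ^ 2 * (g x + r) := by nlinarith [sq_nonneg (w x)]
          exact mul_nonneg h5 (Real.exp_pos _).le
        have h5 := hmono hlt.le
        simp only [hz] at h5
        have h6 : w η₁ ^ 2 * Real.exp ((2*r) * η₁) ≤ 0 := by simpa using h5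
        have h7 := Real.exp_pos ((2*r) * η₁)
        have h8 : w η₁ ^ 2 = 0 := le_antisymm (by nlinarith [sq_nonneg (w η₁)]) (sq_nonneg _)
        exact pow_eq_zero_iff (by norm_num) |>.mp h8
    -- constant sign
    have hsign : (∀ η, 0 < w η) ∨ (∀ η, w η < 0) := by
      rcases lt_or_gt_of_ne (hnz η₁) with hneg | hpos
      · right
        intro η₂
        rcases lt_or_gt_of_ne (hnz η₂) with h | h
        · exact h
        · exfalso
          have h0m : (0:ℝ) ∈ Set.uIcc (w η₁) (w η₂) :=
            Set.mem_uIcc.mpr (Or.inl ⟨hneg.le, h.le⟩)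
          obtain ⟨ξ, _, hξ⟩ := intermediate_value_uIcc
            (f := w) (hwd.continuous.continuousOn) h0m
          exact hnz ξ hξ
      · left
        intro η₂
        rcases lt_or_gt_of_ne (hnz η₂) with h | h
        · exfalso
          have h0m : (0:ℝ) ∈ Set.uIcc (w η₁) (w η₂) :=
            Set.mem_uIcc.mpr (Or.inr ⟨h.le, hpos.le⟩)
          obtain ⟨ξ, _, hξ⟩ := intermediate_value_uIcc
            (f := w) (hwd.continuous.continuousOn) h0m
          exact hnz ξ hξ
        · exact h
    -- region where Φ ≥ (1+a)/2
    have hev : ∀ᶠ η in atTop, (1+a)/2 < Φ η :=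
      hlim1.eventually (eventually_gt_nhds (by linarith))
    obtain ⟨M, hM⟩ := eventually_atTop.mp hev
    set c : ℝ := r * ((1-a)/2) with hc
    have hcpos : 0 < c := by
      have : 0 < (1-a)/2 := by linarith
      positivity
    have hgc : ∀ η, M ≤ η → c ≤ g η := by
      intro η hη
      have := hM η hη
      simp only [hgdef, hc]
      nlinarith
    rcases hsign with hpos | hneg
    · -- w > 0 everywhere : blow up of Φ
      have hwMpos := hpos M
      -- w monotone on [M,∞)
      have hmono : ∀ x, M ≤ x → w M + 0 * (x - M) ≤ w x := by
        refine front_mono_helper hwd ?_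
        intro x hx
        rw [hw' x]
        have h1 := hgc x hx
        have := mul_nonneg (le_trans hcpos.le h1) (hpos x).le
        linarith
      have hwge : ∀ x, M ≤ x → w M ≤ w x := by
        intro x hx; have := hmono x hx; linarith
      have hgrow : ∀ x, M ≤ x → w M + (c * w M) * (x - M) ≤ w x := by
        refine front_mono_helper hwd ?_
        intro x hx
        rw [hw' x]
        have h1 := hgc x hx
        have h2 := hwge x hx
        have := mul_le_mul h1 h2 hwMpos.le (le_trans hcpos.le h1)
        linarith
      set N : ℝ := M + 1 / (c * w M) with hN
      have hcw : 0 < c * w M := by positivity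
      have hMN : M ≤ N := by
        have : 0 < 1 / (c * w M) := by positivity
        simp only [hN]; linarith
      have hwN : ∀ x, N ≤ x → (1:ℝ) ≤ w x := by
        intro x hx
        have hMx : M ≤ x := le_trans hMN hx
        have := hgrow x hMx
        have h8 : (c * w M) * (x - M) ≥ 1 := by
          have h9 : x - M ≥ 1 / (c * w M) := by simp only [hN] at hx; linarith
          calc (1:ℝ) = (c * w M) * (1 / (c * w M)) := by field_simp
          _ ≤ (c * w M) * (x - M) := mul_le_mul_of_nonneg_left h9 hcw.le
        nlinarith [hwMpos]
      -- Φ' ≥ 1 on [N,∞)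
      have hΦ' : ∀ x, N ≤ x → (1:ℝ) ≤ deriv Φ x := by
        intro x hx
        have h1 := hwN x hx
        have h2 := (hrange x).1
        have h3 := (hrange x).2
        simp only [hwdef] at h1
        have h6 : 0 ≤ k * (Φ x * (1 - Φ x)) :=
          mul_nonneg hkpos.le (mul_nonneg h2 (by linarith))
        linarith
      have := front_mono_helper hΦd hΦ' (N + 2) (by linarith)
      have h4 := (hrange (N+2)).2
      have h5 := (hrange N).1
      linarith
    · -- w < 0 everywhere : Φ goes below 0
      have hwMneg := hneg M
      have hanti : ∀ x, M ≤ x → w x ≤ w M + 0 * (x - M) := by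
        refine front_anti_helper hwd ?_
        intro x hx
        rw [hw' x]
        have h1 := hgc x hx
        have := mul_nonpos_iff.mpr (Or.inl ⟨le_trans hcpos.le h1, (hneg x).le⟩)
        linarith
      have hwle : ∀ x, M ≤ x → w x ≤ w M := by
        intro x hx; have := hanti x hx; linarith
      have hdecay : ∀ x, M ≤ x → w x ≤ w M + (c * w M) * (x - M) := by
        refine front_anti_helper hwd ?_
        intro x hx
        rw [hw' x]
        have h1 := hgc x hx
        have h2 := hwle x hx
        have h3 : g x * w x ≤ c * w x := mul_le_mul_of_nonpos_right h1 (hneg x).le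
        have h4 : c * w x ≤ c * w M := mul_le_mul_of_nonneg_left h2 hcpos.le
        linarith
      set N : ℝ := M + 3 / (c * (-(w M))) with hN
      have hcw : 0 < c * (-(w M)) := by
        have : 0 < -(w M) := by linarith
        positivity
      have hMN : M ≤ N := by
        have : 0 < 3 / (c * (-(w M))) := by positivity
        simp only [hN]; linarith
      have hwN : ∀ x, N ≤ x → w x ≤ -3 := by
        intro x hx
        have hMx : M ≤ x := le_trans hMN hx
        have := hdecay x hMx
        have h8 : (c * w M) * (x - M) ≤ -3 := by
          have h9 : x - M ≥ 3 / (c * (-(w M))) := by simp only [hN] at hx; linarith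
          have h10 : (c * w M) * (3 / (c * (-(w M)))) = -3 := by
            have hne : c * (-(w M)) ≠ 0 := ne_of_gt hcw
            have key : ∀ u : ℝ, u ≠ 0 → u * (3 / u) = 3 := fun u hu => by field_simp
            calc (c * w M) * (3 / (c * (-(w M))))
                = -((c * (-(w M))) * (3 / (c * (-(w M))))) := by ring
              _ = -3 := by rw [key _ hne]
          calc (c * w M) * (x - M) ≤ (c * w M) * (3 / (c * (-(w M)))) :=
                mul_le_mul_of_nonpos_left h9 (by nlinarith)
          _ = -3 := h10
        linarith
      have hΦ' : ∀ x, N ≤ x → deriv Φ x ≤ -1 := by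
        intro x hx
        have h1 := hwN x hx
        have h2 := (hrange x).1
        have h3 := (hrange x).2
        simp only [hwdef] at h1
        have h6 : 0 ≤ Φ x * (1 - Φ x) := mul_nonneg h2 (by linarith)
        have h7 : Φ x * (1 - Φ x) ≤ 1 := by nlinarith
        have h8 : k * (Φ x * (1 - Φ x)) ≤ 1 := by
          nlinarith [mul_nonneg (by simp only [hk]; linarith : (0:ℝ) ≤ 1 - k) h6]
        linarith
      have := front_anti_helper hΦd hΦ' (N + 2) (by linarith)
      have h4 := (hrange (N+2)).1
      have h5 := (hrange N).2
      linarith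
  -- logistic first-order equation
  have hlog : ∀ η, deriv Φ η = k * (Φ η * (1 - Φ η)) := by
    intro η
    have := hw0 η
    simp only [hwdef] at this
    linarith
  -- strict bounds
  have hΦpos : ∀ η, 0 < Φ η := by
    by_contra hcon
    push_neg at hcon
    obtain ⟨η₁, hη₁⟩ := hcon
    have hz : Φ η₁ = 0 := le_antisymm hη₁ (hrange η₁).1
    have hu : ∀ x, HasDerivAt (fun y => Φ y * Real.exp (-k * y))
        ((-k * (Φ x)^2) * Real.exp (-k * x)) x := by
      intro x
      have h1 : HasDerivAt (fun y => Real.exp (-k * y)) (Real.exp (-k * x) * (-k)) x :=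
        (by simpa using (hasDerivAt_id x).const_mul (-k) :
          HasDerivAt (fun y => -k * y) (-k) x).exp
      have := (hΦd x).hasDerivAt.mul h1
      refine this.congr_deriv ?_
      rw [hlog x]; ring
    have hanti : Antitone (fun y => Φ y * Real.exp (-k * y)) := by
      refine antitone_of_deriv_nonpos (fun x => (hu x).differentiableAt) ?_
      intro x
      rw [(hu x).deriv]
      have h5 : -k * (Φ x)^2 ≤ 0 := by nlinarith [sq_nonneg (Φ x), hkpos]
      exact mul_nonpos_iff.mpr (Or.inr ⟨h5, (Real.exp_pos _).le⟩)
    have hzero : ∀ x, η₁ ≤ x → Φ x = 0 := by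
      intro x hx
      have h5 := hanti hx
      simp only [hz, zero_mul] at h5
      have h7 := Real.exp_pos (-k * x)
      have h9 : 0 ≤ Φ x * Real.exp (-k * x) := mul_nonneg (hrange x).1 h7.le
      have h10 : Φ x * Real.exp (-k * x) = 0 := le_antisymm h5 h9
      rcases mul_eq_zero.mp h10 with h | h
      · exact h
      · exact absurd h (ne_of_gt h7)
    have h0 : Tendsto Φ atTop (𝓝 (0:ℝ)) := by
      apply Tendsto.congr' _ tendsto_const_nhds
      filter_upwards [eventually_ge_atTop η₁] with x hx
      exact (hzero x hx).symm
    have := tendsto_nhds_unique h0 hlim1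
    norm_num at this
  have hΦlt : ∀ η, Φ η < 1 := by
    by_contra hcon
    push_neg at hcon
    obtain ⟨η₁, hη₁⟩ := hcon
    have hz : Φ η₁ = 1 := le_antisymm (hrange η₁).2 hη₁
    have hu : ∀ x, HasDerivAt (fun y => (1 - Φ y) * Real.exp (k * y))
        ((k * (1 - Φ x)^2) * Real.exp (k * x)) x := by
      intro x
      have h1 : HasDerivAt (fun y => Real.exp (k * y)) (Real.exp (k * x) * k) x :=
        (by simpa using (hasDerivAt_id x).const_mul k :
          HasDerivAt (fun y => k * y) k x).exp
      have h2 : HasDerivAt (fun y => 1 - Φ y) (0 - deriv Φ x) x :=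
        (hasDerivAt_const x (1:ℝ)).sub (hΦd x).hasDerivAt
      have := h2.mul h1
      refine this.congr_deriv ?_
      rw [hlog x]; ring
    have hmono : Monotone (fun y => (1 - Φ y) * Real.exp (k * y)) := by
      refine monotone_of_deriv_nonneg (fun x => (hu x).differentiableAt) ?_
      intro x
      rw [(hu x).deriv]
      exact mul_nonneg (mul_nonneg hkpos.le (sq_nonneg _)) (Real.exp_pos _).le
    have hone : ∀ x, x ≤ η₁ → Φ x = 1 := by
      intro x hx
      have h5 := hmono hx
      simp only [hz, sub_self, zero_mul] at h5
      have h7 := Real.exp_pos (k * x)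
      have h9 : 0 ≤ (1 - Φ x) * Real.exp (k * x) :=
        mul_nonneg (by have := (hrange x).2; linarith) h7.le
      have h10 : (1 - Φ x) * Real.exp (k * x) = 0 := le_antisymm h5 h9
      rcases mul_eq_zero.mp h10 with h | h
      · linarith
      · exact absurd h (ne_of_gt h7)
    have h0 : Tendsto Φ atBot (𝓝 (1:ℝ)) := by
      apply Tendsto.congr' _ tendsto_const_nhds
      filter_upwards [eventually_le_atBot η₁] with x hx
      exact (hone x hx).symm
    have := tendsto_nhds_unique h0 hlim0
    norm_num at this
  -- the logit is affine
  set G : ℝ → ℝ := fun η => Real.log (Φ η) - Real.log (1 - Φ η) with hGdef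
  have hGd : ∀ η, HasDerivAt G k η := by
    intro η
    have h0 := hΦpos η
    have h1 : (0:ℝ) < 1 - Φ η := by have := hΦlt η; linarith
    have hl1 : HasDerivAt (fun y => Real.log (Φ y)) (deriv Φ η / Φ η) η :=
      ((hΦd η).hasDerivAt).log (ne_of_gt h0)
    have hl2 : HasDerivAt (fun y => Real.log (1 - Φ y))
        ((0 - deriv Φ η) / (1 - Φ η)) η := by
      have h2 : HasDerivAt (fun y => 1 - Φ y) (0 - deriv Φ η) η :=
        (hasDerivAt_const η (1:ℝ)).sub (hΦd η).hasDerivAt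
      exact h2.log (ne_of_gt h1)
    have := hl1.sub hl2
    refine this.congr_deriv ?_
    rw [hlog η]
    field_simp
    ring
  have hGaff : ∀ η, G η = k * η + G 0 := by
    have hd : Differentiable ℝ (fun η => G η - k * η) := fun η =>
      ((hGd η).sub (by simpa using (hasDerivAt_id η).const_mul k :
        HasDerivAt (fun y => k * y) k η)).differentiableAt
    have hd0 : ∀ x, deriv (fun η => G η - k * η) x = 0 := by
      intro x
      have : HasDerivAt (fun η => G η - k * η) (k - k) x :=
        (hGd x).sub (by simpa using (hasDerivAt_id x).const_mul k :
          HasDerivAt (fun y => k * y) k x)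
      rw [this.deriv]; ring
    intro η
    have := is_const_of_deriv_eq_zero hd hd0 η 0
    linarith [this]
  refine ⟨r * G 0, fun η => ?_⟩
  have harg : r * (η + r * G 0) / 4 = G η / 2 := by
    rw [hGaff η]
    simp only [hk]
    linear_combination (G 0 / 4) * hrr
  rw [harg, hGdef]
  exact (half_one_add_tanh_logit (hΦpos η) (hΦlt η)).symm
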